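/- Let D₊, D₋, β₊, β₋ > 0, σ > 0, M > 0 be positive reals, and for each nonzero integer m and each τ ∈ [0,1] suppose Re λ_m = -μ_m - ν_m where μ_m := Δ·( tanh(D₊·m)/(β₊·D₊·m) + tanh(D₋·m)/(β₋·D₋·m) )⁻¹ with Δ ≥ σ, and |ν_m| ≤ M·|m|/cosh(min(D₊,D₋)·|m|). Then there exist a constant c > 0 and an integer m₀ ≥ 1 (depending only on D±, β±, σ, M) such that Re λ_m ≤ -c·|m| for all integers m with |m| ≥ m₀ and all τ ∈ [0,1]. -/

import Mathlib

lemma aux_tanh_one (x : ℝ) : Real.tanh x < 1 := by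
  rw [Real.tanh_eq_sinh_div_cosh, div_lt_one (Real.cosh_pos x)]
  exact Real.sinh_lt_cosh x

lemma aux_tanh_pos {x : ℝ} (hx : 0 < x) : 0 < Real.tanh x := by
  rw [Real.tanh_eq_sinh_div_cosh]
  exact div_pos (Real.sinh_pos_iff.mpr hx) (Real.cosh_pos x)

/-- For nonzero x, 0 < tanh(D x)/(β (D x)) ≤ 1/(β D |x|). -/
lemma aux_term {D β : ℝ} (hD : 0 < D) (hβ : 0 < β) {x : ℝ} (hx : x ≠ 0) :
    0 < Real.tanh (D * x) / (β * (D * x)) ∧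
      Real.tanh (D * x) / (β * (D * x)) ≤ 1 / (β * D * |x|) := by
  have key : ∀ y : ℝ, 0 < y →
      0 < Real.tanh (D * y) / (β * (D * y)) ∧
        Real.tanh (D * y) / (β * (D * y)) ≤ 1 / (β * D * |y|) := by
    intro y hy
    have hDy : 0 < D * y := mul_pos hD hy
    have hβDy : 0 < β * (D * y) := mul_pos hβ hDy
    constructor
    · exact div_pos (aux_tanh_pos hDy) hβDy
    · rw [abs_of_pos hy]
      have : β * D * y = β * (D * y) := by ring
      rw [this]
      gcongr
      exact (aux_tanh_one _).le
  rcases hx.lt_or_gt with h | h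
  · have := key (-x) (by linarith)
    rw [mul_neg, Real.tanh_neg, mul_neg, neg_div_neg_eq, abs_neg] at this
    exact this
  · exact key x h

/-- uniform sectoriality Re λ_m ≤ -c|m| for large |m|, combining
the linear growth of the Dirichlet–Neumann part with the exponential decay of
the correction. -/
theorem stmt_19 (Dp Dn βp βn σ M : ℝ)
    (hDp : 0 < Dp) (hDn : 0 < Dn) (hβp : 0 < βp) (hβn : 0 < βn)
    (hσ : 0 < σ) (hM : 0 < M) (Δ : ℝ) (hΔ : σ ≤ Δ)
    (lam : ℤ → ℝ → ℂ) (ν : ℤ → ℝ → ℝ)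
    (hre : ∀ m : ℤ, m ≠ 0 → ∀ τ ∈ Set.Icc (0:ℝ) 1,
      (lam m τ).re = -(Δ *
        (Real.tanh (Dp * (m : ℝ)) / (βp * (Dp * (m : ℝ)))
          + Real.tanh (Dn * (m : ℝ)) / (βn * (Dn * (m : ℝ))))⁻¹) - ν m τ)
    (hν : ∀ m : ℤ, m ≠ 0 → ∀ τ ∈ Set.Icc (0:ℝ) 1,
      |ν m τ| ≤ M * |(m : ℝ)| / Real.cosh (min Dp Dn * |(m : ℝ)|)) :
    ∃ c : ℝ, 0 < c ∧ ∃ m₀ : ℕ, 1 ≤ m₀ ∧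
      ∀ m : ℤ, (m₀ : ℤ) ≤ |m| → ∀ τ ∈ Set.Icc (0:ℝ) 1,
        (lam m τ).re ≤ -c * |(m : ℝ)| := by
  set K : ℝ := 1 / (βp * Dp) + 1 / (βn * Dn) with hK
  have hKpos : 0 < K :=
    add_pos (one_div_pos.mpr (mul_pos hβp hDp)) (one_div_pos.mpr (mul_pos hβn hDn))
  set c : ℝ := σ / (2 * K) with hc
  have hcpos : 0 < c := div_pos hσ (by positivity)
  set d : ℝ := min Dp Dn with hd
  have hdpos : 0 < d := lt_min hDp hDn
  refine ⟨c, hcpos, max 1 ⌈Real.log (4 * K * M / σ) / d⌉₊, le_max_left _ _, ?_⟩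
  intro m hm τ hτ
  have hm1 : (1 : ℤ) ≤ |m| := le_trans (by exact_mod_cast le_max_left 1 _) hm
  have hm0 : m ≠ 0 := by
    intro h; rw [h] at hm1; simp at hm1
  have habs : (1 : ℝ) ≤ |(m : ℝ)| := by
    rw [← Int.cast_abs]; exact_mod_cast hm1
  have habspos : (0 : ℝ) < |(m : ℝ)| := lt_of_lt_of_le one_pos habs
  -- bound the DN part
  obtain ⟨hp1, hp2⟩ := aux_term hDp hβp (x := (m : ℝ)) (by exact_mod_cast hm0)
  obtain ⟨hn1, hn2⟩ := aux_term hDn hβn (x := (m : ℝ)) (by exact_mod_cast hm0)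
  set S : ℝ := Real.tanh (Dp * (m : ℝ)) / (βp * (Dp * (m : ℝ)))
      + Real.tanh (Dn * (m : ℝ)) / (βn * (Dn * (m : ℝ))) with hS
  have hSpos : 0 < S := add_pos hp1 hn1
  have hSle : S ≤ K / |(m : ℝ)| := by
    have : S ≤ 1 / (βp * Dp * |(m : ℝ)|) + 1 / (βn * Dn * |(m : ℝ)|) := add_le_add hp2 hn2
    calc S ≤ 1 / (βp * Dp * |(m : ℝ)|) + 1 / (βn * Dn * |(m : ℝ)|) := this
      _ = K / |(m : ℝ)| := by
          field_simp [hK]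
          rw [hK]; field_simp
  have hmu : 2 * c * |(m : ℝ)| ≤ Δ * S⁻¹ := by
    have h1 : (K / |(m : ℝ)|)⁻¹ ≤ S⁻¹ := inv_anti₀ hSpos hSle
    rw [inv_div] at h1
    calc 2 * c * |(m : ℝ)| = σ * (|(m : ℝ)| / K) := by
          rw [hc]; field_simp
      _ ≤ Δ * (|(m : ℝ)| / K) :=
          mul_le_mul_of_nonneg_right hΔ (by positivity)
      _ ≤ Δ * S⁻¹ := mul_le_mul_of_nonneg_left h1 (le_trans hσ.le hΔ)
  -- bound the correction
  have hnu : |ν m τ| ≤ c * |(m : ℝ)| := by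
    have h1 := hν m hm0 τ hτ
    have hcosh : M / c ≤ Real.cosh (d * |(m : ℝ)|) := by
      have hexp : Real.exp (d * |(m : ℝ)|) / 2 ≤ Real.cosh (d * |(m : ℝ)|) := by
        rw [Real.cosh_eq]
        have := Real.exp_pos (-(d * |(m : ℝ)|))
        linarith
      refine le_trans ?_ hexp
      rw [div_le_div_iff₀ hcpos two_pos]
      have hMc : M * 2 = (4 * K * M / σ) * c := by
        rw [hc]; field_simp; ring
      rw [hMc]
      refine mul_le_mul_of_nonneg_right ?_ (le_of_lt hcpos)
      calc 4 * K * M / σ ≤ Real.exp (Real.log (4 * K * M / σ)) := by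
            rw [Real.exp_log (by positivity)]
        _ ≤ Real.exp (d * |(m : ℝ)|) := by
            apply Real.exp_le_exp.mpr
            have hmge : (↑(max 1 ⌈Real.log (4 * K * M / σ) / d⌉₊) : ℝ) ≤ |(m : ℝ)| := by
              rw [← Int.cast_abs]
              exact_mod_cast hm
            have h2 : Real.log (4 * K * M / σ) / d ≤ (↑(max 1 ⌈Real.log (4 * K * M / σ) / d⌉₊) : ℝ) :=
              le_trans (Nat.le_ceil _) (by exact_mod_cast Nat.le_max_right 1 _)
            have := le_trans h2 hmge
            calc Real.log (4 * K * M / σ) = d * (Real.log (4 * K * M / σ) / d) := by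
                  field_simp
              _ ≤ d * |(m : ℝ)| := mul_le_mul_of_nonneg_left this (le_of_lt hdpos)
    calc |ν m τ| ≤ M * |(m : ℝ)| / Real.cosh (d * |(m : ℝ)|) := h1
      _ ≤ M * |(m : ℝ)| / (M / c) := by
          apply div_le_div_of_nonneg_left (by positivity) (div_pos hM hcpos) hcosh
      _ = c * |(m : ℝ)| := by field_simp
  -- combine
  rw [hre m hm0 τ hτ]
  have hnu' : -ν m τ ≤ c * |(m : ℝ)| := (neg_le_abs _).trans hnu
  nlinarith [hmu, hnu']
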